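/- Let $k$ be a field of characteristic zero. Let $\mathfrak{g} = \mathfrak{sl}(2,k) \oplus \mathfrak{g}_1$ be a finite-dimensional Lie superalgebra whose even part is $\mathfrak{sl}(2,k)$, and suppose the odd part $\mathfrak{g}_1$, as a representation of $\mathfrak{sl}(2,k)$, contains an irreducible submodule of dimension strictly greater than 3. Then $\{\mathfrak{g}_1, \mathfrak{g}_1\} = \{0\}$. -/

import Mathlib

/-- The Lie algebra `sl(2,k)` of traceless `2 × 2` matrices. -/
abbrev sl2 (k : Type*) [Field k] : Type _ := ↥(LieAlgebra.SpecialLinear.sl (Fin 2) k)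

namespace Stmt15Aux

variable (k : Type*) [Field k]

lemma mem_sl2 (A : Matrix (Fin 2) (Fin 2) k) (h : A.trace = 0) :
    A ∈ LieAlgebra.SpecialLinear.sl (Fin 2) k := h

def Eel : sl2 k := ⟨!![0,1;0,0], mem_sl2 k _ (by simp [Matrix.trace_fin_two])⟩
def Hel : sl2 k := ⟨!![1,0;0,-1], mem_sl2 k _ (by simp [Matrix.trace_fin_two])⟩
def Fel : sl2 k := ⟨!![0,0;1,0], mem_sl2 k _ (by simp [Matrix.trace_fin_two])⟩

variable {k}

lemma trace_eq (X : sl2 k) : X.val 1 1 = - X.val 0 0 := by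
  have h : X.val.trace = 0 := X.2
  rw [Matrix.trace_fin_two] at h
  linear_combination h

lemma coe_bracket_sl2 (X Y : sl2 k) :
    (↑(⁅X, Y⁆) : Matrix (Fin 2) (Fin 2) k) = X.val * Y.val - Y.val * X.val :=
  rfl

@[simp] lemma val_smul (c : k) (X : sl2 k) :
    (↑(c • X) : Matrix (Fin 2) (Fin 2) k) = c • X.val := rfl

@[simp] lemma val_add (X Y : sl2 k) :
    (↑(X + Y) : Matrix (Fin 2) (Fin 2) k) = X.val + Y.val := rfl

@[simp] lemma val_nsmul (n : ℕ) (X : sl2 k) :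
    (↑(n • X) : Matrix (Fin 2) (Fin 2) k) = n • X.val := rfl

@[simp] lemma val_neg (X : sl2 k) :
    (↑(-X) : Matrix (Fin 2) (Fin 2) k) = - X.val := rfl

lemma sl2_ext {X Y : sl2 k} (h00 : X.val 0 0 = Y.val 0 0) (h01 : X.val 0 1 = Y.val 0 1)
    (h10 : X.val 1 0 = Y.val 1 0) : X = Y := by
  apply Subtype.ext
  rw [Matrix.eta_fin_two X.val, Matrix.eta_fin_two Y.val, h00, h01, h10, trace_eq X, trace_eq Y,
    h00]

lemma bracket_H (X : sl2 k) :
    (↑(⁅Hel k, X⁆) : Matrix (Fin 2) (Fin 2) k)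
      = !![0, 2 * X.val 0 1; -(2 * X.val 1 0), 0] := by
  rw [coe_bracket_sl2]
  show !![1,0;0,-1] * X.val - X.val * !![1,0;0,-1] = _
  rw [Matrix.eta_fin_two X.val, Matrix.mul_fin_two, Matrix.mul_fin_two]
  ext i j
  fin_cases i <;> fin_cases j <;> simp <;> ring

lemma bracket_E (X : sl2 k) :
    (↑(⁅Eel k, X⁆) : Matrix (Fin 2) (Fin 2) k)
      = !![X.val 1 0, X.val 1 1 - X.val 0 0; 0, - X.val 1 0] := by
  rw [coe_bracket_sl2]
  show !![0,1;0,0] * X.val - X.val * !![0,1;0,0] = _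
  rw [Matrix.eta_fin_two X.val, Matrix.mul_fin_two, Matrix.mul_fin_two]
  ext i j
  fin_cases i <;> fin_cases j <;> simp <;> ring

lemma entries_of_lie_H {X : sl2 k} {t : k} (h : ⁅Hel k, X⁆ = t • X) :
    (t = 0 ∨ X.val 0 0 = 0) ∧ (t = 2 ∨ X.val 0 1 = 0) ∧ (t = -2 ∨ X.val 1 0 = 0) := by
  have h' : (↑(⁅Hel k, X⁆) : Matrix (Fin 2) (Fin 2) k) = t • X.val := by
    rw [h]; exact val_smul t X
  rw [bracket_H] at h'
  have h00 := congrFun (congrFun h' 0) 0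
  have h01 := congrFun (congrFun h' 0) 1
  have h10 := congrFun (congrFun h' 1) 0
  simp only [Matrix.smul_apply, smul_eq_mul, Matrix.cons_val', Matrix.cons_val_zero,
    Matrix.cons_val_one, Matrix.head_cons, Matrix.empty_val', Matrix.cons_val_fin_one,
    Matrix.head_fin_const, Matrix.of_apply] at h00 h01 h10
  refine ⟨?_, ?_, ?_⟩
  · rcases mul_eq_zero.mp h00.symm with h | h
    · exact Or.inl h
    · exact Or.inr h
  · have : (t - 2) * X.val 0 1 = 0 := by linear_combination -h01
    rcases mul_eq_zero.mp this with h | h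
    · exact Or.inl (by linear_combination h)
    · exact Or.inr h
  · have : (t + 2) * X.val 1 0 = 0 := by linear_combination -h10
    rcases mul_eq_zero.mp this with h | h
    · exact Or.inl (by linear_combination h)
    · exact Or.inr h

lemma wt_kill {X : sl2 k} {t : k} (h : ⁅Hel k, X⁆ = t • X)
    (h0 : t ≠ 0) (h2 : t ≠ 2) (hm2 : t ≠ -2) : X = 0 := by
  obtain ⟨e0, e1, e2⟩ := entries_of_lie_H h
  refine sl2_ext ?_ ?_ ?_
  · simpa using e0.resolve_left h0
  · simpa using e1.resolve_left h2
  · simpa using e2.resolve_left hm2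

lemma wt_zeroH [CharZero k] {X : sl2 k} (h : ⁅Hel k, X⁆ = (0:k) • X) :
    X = X.val 0 0 • Hel k := by
  obtain ⟨_, e1, e2⟩ := entries_of_lie_H h
  have hx01 : X.val 0 1 = 0 := e1.resolve_left (by norm_num)
  have hx10 : X.val 1 0 = 0 := e2.resolve_left (by norm_num)
  refine sl2_ext ?_ ?_ ?_ <;>
    simp [Hel, hx01, hx10, Matrix.smul_apply]

lemma wt_neg2 [CharZero k] {X : sl2 k} (h : ⁅Hel k, X⁆ = (-2:k) • X)
    (he : ⁅Eel k, X⁆ = 0) : X = 0 := by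
  obtain ⟨e0, e1, _⟩ := entries_of_lie_H h
  have hx00 : X.val 0 0 = 0 := e0.resolve_left (by norm_num)
  have hx01 : X.val 0 1 = 0 := e1.resolve_left (by norm_num)
  have he' : (↑(⁅Eel k, X⁆) : Matrix (Fin 2) (Fin 2) k) = 0 := by rw [he]; rfl
  rw [bracket_E] at he'
  have h10 := congrFun (congrFun he' 0) 0
  simp at h10
  exact sl2_ext (by simpa using hx00) (by simpa using hx01) (by simpa using h10)

lemma sl2_span (X : sl2 k) :
    X = X.val 0 1 • Eel k + X.val 0 0 • Hel k + X.val 1 0 • Fel k := by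
  refine sl2_ext ?_ ?_ ?_ <;>
    simp [Eel, Hel, Fel, Matrix.smul_apply]

lemma Hel_ne_zero : (Hel k) ≠ 0 := by
  intro h
  have := congrFun (congrFun (congrArg Subtype.val h) 0) 0
  simp [Hel] at this

lemma sl2_triple : IsSl2Triple (Hel k) (Eel k) (Fel k) where
  h_ne_zero := Hel_ne_zero
  lie_e_f := by
    refine sl2_ext ?_ ?_ ?_ <;>
      norm_num [coe_bracket_sl2, Ring.lie_def, Eel, Hel, Fel, Matrix.mul_fin_two, Matrix.sub_apply]
  lie_h_e_nsmul := by
    refine sl2_ext ?_ ?_ ?_ <;>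
      norm_num [coe_bracket_sl2, Ring.lie_def, Eel, Hel, Matrix.mul_fin_two, Matrix.sub_apply, Matrix.smul_apply]
  lie_h_f_nsmul := by
    refine sl2_ext ?_ ?_ ?_ <;>
      norm_num [coe_bracket_sl2, Ring.lie_def, Fel, Hel, Matrix.mul_fin_two, Matrix.sub_apply, Matrix.smul_apply]

section Generic

variable {k : Type*} [Field k] {V : Type*} [AddCommGroup V] [Module k V]

lemma extract3 {ι : Type*} {v : ι → V} (li : LinearIndependent k v)
    {p q r : ι} (hpq : p ≠ q) (hpr : p ≠ r) (hqr : q ≠ r)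
    {α β γ : k} (h : α • v p + β • v q + γ • v r = 0) : α = 0 ∧ β = 0 ∧ γ = 0 := by
  have h0 : Finsupp.linearCombination k v
      (Finsupp.single p α + Finsupp.single q β + Finsupp.single r γ) = 0 := by
    rw [map_add, map_add, Finsupp.linearCombination_single, Finsupp.linearCombination_single,
      Finsupp.linearCombination_single]
    exact h
  have hz := linearIndependent_iff.mp li _ h0
  refine ⟨?_, ?_, ?_⟩
  · have := DFunLike.congr_fun hz p
    simpa [Finsupp.single_apply, Ne.symm hpq, Ne.symm hpr] using this
  · have := DFunLike.congr_fun hz q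
    simpa [Finsupp.single_apply, hpq, Ne.symm hqr] using this
  · have := DFunLike.congr_fun hz r
    simpa [Finsupp.single_apply, hpr, hqr] using this

lemma extract2 {ι : Type*} {v : ι → V} (li : LinearIndependent k v)
    {p q : ι} (hpq : p ≠ q)
    {α β : k} (h : α • v p + β • v q = 0) : α = 0 ∧ β = 0 := by
  have h0 : Finsupp.linearCombination k v
      (Finsupp.single p α + Finsupp.single q β) = 0 := by
    rw [map_add, Finsupp.linearCombination_single, Finsupp.linearCombination_single]
    exact h
  have hz := linearIndependent_iff.mp li _ h0
  constructor
  · have := DFunLike.congr_fun hz p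
    simpa [Finsupp.single_apply, Ne.symm hpq] using this
  · have := DFunLike.congr_fun hz q
    simpa [Finsupp.single_apply, hpq] using this

variable [CharZero k]

lemma isNilpotent_of_lie_two_smul [FiniteDimensional k V]
    (A N : Module.End k V) (h : A * N - N * A = (2:k) • N) : IsNilpotent N := by
  by_contra hnil
  have hpow : ∀ n : ℕ, N ^ n ≠ 0 := fun n hn => hnil ⟨n, hn⟩
  have key : ∀ n : ℕ, A * N ^ n - N ^ n * A = ((2 * n : ℕ) : k) • N ^ n := by
    intro n
    induction n with
    | zero => simp
    | succ n ih =>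
      have expand : A * N ^ (n+1) - N ^ (n+1) * A
          = (A * N - N * A) * N ^ n + N * (A * N ^ n - N ^ n * A) := by
        rw [pow_succ']
        noncomm_ring
      rw [expand, h, ih, smul_mul_assoc, mul_smul_comm, ← pow_succ', ← add_smul]
      congr 1
      push_cast
      ring
  set T : Module.End k (Module.End k V) :=
    LinearMap.mulLeft k A - LinearMap.mulRight k A with hT
  have hTe : ∀ n : ℕ, T (N ^ n) = ((2*n:ℕ):k) • N ^ n := by
    intro n
    rw [hT, LinearMap.sub_apply, LinearMap.mulLeft_apply, LinearMap.mulRight_apply]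
    exact key n
  set D := Module.finrank k (Module.End k V) with hD
  have li := Module.End.eigenvectors_linearIndependent' T
      (fun i : Fin (D+1) => ((2*(i:ℕ):ℕ):k))
      (fun i j hij => by
        have h2 : 2*(i:ℕ) = 2*(j:ℕ) := Nat.cast_injective hij
        have : (i:ℕ) = (j:ℕ) := by omega
        exact Fin.ext this)
      (fun i => N ^ (i:ℕ))
      (fun i => ⟨Module.End.mem_eigenspace_iff.mpr (hTe i), hpow i⟩)
  have hcard := li.fintype_card_le_finrank
  simp only [Fintype.card_fin, ← hD] at hcard
  omega

lemma exists_ker_ne_zero [Nontrivial V] (N : Module.End k V) (hN : IsNilpotent N) :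
    ∃ v : V, v ≠ 0 ∧ N v = 0 := by
  obtain ⟨d, hd⟩ := hN
  by_contra hcon
  push_neg at hcon
  have hker : LinearMap.ker N = ⊥ := by
    rw [LinearMap.ker_eq_bot']
    intro m hm
    by_contra hm0
    exact hcon m hm0 hm
  have hinj : Function.Injective N := LinearMap.ker_eq_bot.mp hker
  have hinjpow : ∀ n : ℕ, Function.Injective (N ^ n) := by
    intro n
    induction n with
    | zero => exact fun a b h => by simpa using h
    | succ n ih =>
      rw [pow_succ, Module.End.mul_eq_comp, LinearMap.coe_comp]
      exact ih.comp hinj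
  obtain ⟨v, hv⟩ := exists_ne (0 : V)
  apply hv
  apply hinjpow d
  rw [hd]
  simp

section Klemmas

variable (A N M : Module.End k V)
  (hNM : ∀ v : V, N (M v) = M (N v) + A v)
  (hAN : ∀ v : V, N (A v) = A (N v) - (2:k) • N v)
  (hAM : ∀ v : V, M (A v) = A (M v) + (2:k) • M v)

include hAM in
lemma K0 : ∀ (n : ℕ) (v : V), (M^n) (A v) = A ((M^n) v) + ((2*n:ℕ):k) • (M^n) v := by
  intro n
  induction n with
  | zero => simp
  | succ n ih =>
    intro v
    have h1 : (M^(n+1)) (A v) = (M^n) (M (A v)) := by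
      rw [pow_succ, Module.End.mul_apply]
    have h2 : (M^n) (M v) = (M^(n+1)) v := by
      rw [pow_succ, Module.End.mul_apply]
    rw [h1, hAM v, map_add, map_smul, ih (M v), h2]
    have : ((2*(n+1):ℕ):k) = ((2*n:ℕ):k) + 2 := by push_cast; ring
    rw [this, add_smul]
    abel

include hNM hAM in
lemma K1 : ∀ (n : ℕ) (v : V), N v = 0 →
    N ((M^(n+1)) v) = (((n+1):ℕ):k) • (M^n) (A v) - (((n+1)*n :ℕ):k) • (M^n) v := by
  intro n
  induction n with
  | zero =>
    intro v hv
    have h1 : (M^(0+1)) v = M v := by rw [zero_add, pow_one]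
    rw [h1, hNM v, hv, map_zero, zero_add]
    simp
  | succ n ih =>
    intro v hv
    have h1 : (M^(n+2)) v = M ((M^(n+1)) v) := by
      rw [pow_succ', Module.End.mul_apply]
    rw [h1, hNM ((M^(n+1)) v), ih v hv, map_sub, map_smul, map_smul]
    have h2 : M ((M^n) (A v)) = (M^(n+1)) (A v) := by
      rw [pow_succ', Module.End.mul_apply]  -- M^(n+1) = M * M^n
    have h3 : M ((M^n) v) = (M^(n+1)) v := by
      rw [pow_succ', Module.End.mul_apply]
    have h4 : A ((M^(n+1)) v) = (M^(n+1)) (A v) - ((2*(n+1):ℕ):k) • (M^(n+1)) v := by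
      have := K0 A M hAM (n+1) v
      rw [this]
      abel
    rw [h2, h3, h4]
    have c1 : (((n+2):ℕ):k) = (((n+1):ℕ):k) + 1 := by push_cast; ring
    have c2 : (((n+2)*(n+1):ℕ):k) = (((n+1)*n:ℕ):k) + ((2*(n+1):ℕ):k) := by push_cast; ring
    rw [c1, c2, add_smul, add_smul]
    push_cast
    module

include hNM hAN hAM in
lemma K3 : ∀ (n : ℕ) (v : V), v ≠ 0 → N v = 0 → (M^n) v = 0 →
    ∃ (j : ℕ) (u : V), u ≠ 0 ∧ N u = 0 ∧ A u = (j:k) • u := by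
  intro n
  induction n with
  | zero =>
    intro v hv hNv hMv
    simp only [pow_zero, Module.End.one_apply] at hMv
    exact absurd hMv hv
  | succ n ih =>
    intro v hv hNv hMv
    by_cases hcase : A v - ((n:ℕ):k) • v = 0
    · refine ⟨n, v, hv, hNv, ?_⟩
      rw [sub_eq_zero] at hcase
      exact hcase
    · refine ih (A v - ((n:ℕ):k) • v) hcase ?_ ?_
      · rw [map_sub, map_smul, hAN v, hNv, map_zero]
        simp
      · -- (M^n) (A v - n • v) = 0
        have hK1 := K1 A N M hNM hAM n v hNv
        rw [hMv, map_zero] at hK1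
        have h5 : (((n+1):ℕ):k) • ((M^n) (A v) - ((n:ℕ):k) • (M^n) v) = 0 := by
          rw [smul_sub, smul_smul]
          rw [eq_comm, sub_eq_zero] at hK1
          rw [hK1]
          have hc : (((n+1)*n:ℕ):k) = ((((n+1):ℕ):k) * ((n:ℕ):k)) := by push_cast; ring
          rw [hc, sub_self]
        have h6 : (((n+1):ℕ):k) ≠ 0 := Nat.cast_ne_zero.mpr (Nat.succ_ne_zero n)
        have h7 := (smul_eq_zero.mp h5).resolve_left h6
        rw [map_sub, map_smul]
        exact h7

end Klemmas

end Generic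

section Steps

variable {k : Type*} [Field k] [CharZero k]

/-- E-action coefficient along the chain. -/
def ecoef (j : ℕ) : ℕ → k := fun i => match i with
  | 0 => 0
  | (n+1) => ((n+1:ℕ):k) * ((j:k) - (n:ℕ))

/-- H-action coefficient along the chain. -/
def hcoef (j : ℕ) : ℕ → k := fun i => (j:k) - 2*(i:k)

lemma ecoef_ne_zero {j i : ℕ} (h1 : 1 ≤ i) (h2 : i ≤ j) : ecoef (k := k) j i ≠ 0 := by
  obtain ⟨n, rfl⟩ : ∃ n, i = n + 1 := ⟨i - 1, by omega⟩
  show (((n+1:ℕ):k) * ((j:k) - (n:ℕ))) ≠ 0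
  have hj : (j:k) - (n:ℕ) = ((j - n : ℕ) : k) := by
    rw [Nat.cast_sub (by omega)]
  rw [hj]
  apply mul_ne_zero
  · exact Nat.cast_ne_zero.mpr (by omega)
  · exact Nat.cast_ne_zero.mpr (by omega)

variable {g1 : Type*} [AddCommGroup g1] [Module k g1]
  [LieRingModule (sl2 k) g1] [LieModule k (sl2 k) g1]

section WithP

variable (P : g1 →ₗ[k] g1 →ₗ[k] sl2 k) (hPsymm : ∀ u v : g1, P u v = P v u)
    (h1 : ∀ u v w : g1, ⁅P u v, w⁆ + ⁅P v w, u⁆ + ⁅P w u, v⁆ = 0)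
    (h2 : ∀ (x : sl2 k) (u v : g1), ⁅x, P u v⁆ = P ⁅x, u⁆ v + P u ⁅x, v⁆)
    (w : ℕ → g1) (j : ℕ) (hj : 3 ≤ j)
    (hH : ∀ i, ⁅Hel k, w i⁆ = hcoef (k := k) j i • w i)
    (hF : ∀ i, ⁅Fel k, w i⁆ = w (i+1))
    (hE : ∀ i, ⁅Eel k, w i⁆ = ecoef (k := k) j i • w (i-1))
    (hzero : ∀ i, j+1 ≤ i → w i = 0)
    (hw0 : w 0 ≠ 0)

include hPsymm h1 h2 hj hH hF hE hzero hw0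

lemma step0 : ∀ i jj : ℕ, P (w i) (w jj) = 0 := by
  -- equivariance identities
  have hHA : ∀ i jj, ⁅Hel k, P (w i) (w jj)⁆ = (hcoef (k := k) j i + hcoef (k := k) j jj) • P (w i) (w jj) := by
    intro i jj
    rw [h2, hH, hH, map_smul, LinearMap.smul_apply, map_smul, add_smul]
  have hFA : ∀ i jj, ⁅Fel k, P (w i) (w jj)⁆ = P (w (i+1)) (w jj) + P (w i) (w (jj+1)) := by
    intro i jj
    rw [h2, hF, hF]
  have hEA : ∀ i jj, ⁅Eel k, P (w i) (w jj)⁆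
      = ecoef (k := k) j i • P (w (i-1)) (w jj) + ecoef (k := k) j jj • P (w i) (w (jj-1)) := by
    intro i jj
    rw [h2, hE, hE, map_smul, LinearMap.smul_apply, map_smul]
  have hAz : ∀ i jj, j+1 ≤ i → P (w i) (w jj) = 0 := by
    intro i jj hi
    rw [hzero i hi, map_zero, LinearMap.zero_apply]
  have hAz2 : ∀ i jj, j+1 ≤ jj → P (w i) (w jj) = 0 := by
    intro i jj hjj
    rw [hPsymm]
    exact hAz jj i hjj
  -- weight kill
  have Kwt : ∀ i jj : ℕ, (i + jj + 2 ≤ j ∨ j + 2 ≤ i + jj) → P (w i) (w jj) = 0 := by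
    intro i jj hcase
    have hcast : hcoef (k := k) j i + hcoef (k := k) j jj = ((2*(j:ℤ) - 2*i - 2*jj : ℤ) : k) := by
      show ((j:k) - 2*(i:k)) + ((j:k) - 2*(jj:k)) = _
      push_cast
      ring
    refine wt_kill (t := hcoef (k := k) j i + hcoef (k := k) j jj) (hHA i jj) ?_ ?_ ?_ <;> rw [hcast]
    · intro hEq
      have : (2*(j:ℤ) - 2*i - 2*jj : ℤ) = 0 := by exact_mod_cast hEq
      omega
    · intro hEq
      have : (2*(j:ℤ) - 2*i - 2*jj : ℤ) = 2 := by exact_mod_cast hEq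
      omega
    · intro hEq
      have : (2*(j:ℤ) - 2*i - 2*jj : ℤ) = -2 := by exact_mod_cast hEq
      omega
  -- the seed
  have hseed : P (w 0) (w j) = 0 := by
    have h00 : P (w 0) (w 0) = 0 := Kwt 0 0 (by omega)
    have hh := h1 (w 0) (w 0) (w j)
    rw [h00, zero_lie, zero_add, hPsymm (w j) (w 0)] at hh
    have hlie0 : ⁅P (w 0) (w j), w 0⁆ = 0 := by
      have h2s : (2:k) • ⁅P (w 0) (w j), w 0⁆ = 0 := by
        rw [two_smul]; exact hh
      exact (smul_eq_zero.mp h2s).resolve_left two_ne_zero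
    have hwt : ⁅Hel k, P (w 0) (w j)⁆ = (0:k) • P (w 0) (w j) := by
      rw [hHA 0 j]
      congr 1
      show ((j:k) - 2*((0:ℕ):k)) + ((j:k) - 2*(j:k)) = 0
      push_cast
      ring
    have hbH := wt_zeroH hwt
    rw [hbH, smul_lie, hH 0] at hlie0
    rw [smul_smul] at hlie0
    rcases smul_eq_zero.mp hlie0 with hcf | hw
    · rcases mul_eq_zero.mp hcf with h | h
      · rw [hbH, h, zero_smul]
      · exfalso
        have hj0 : ((j:ℕ):k) ≠ 0 := Nat.cast_ne_zero.mpr (by omega)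
        have hhc : hcoef (k := k) j 0 = (j:k) := by
          show (j:k) - 2*((0:ℕ):k) = (j:k)
          push_cast; ring
        rw [hhc] at h
        exact hj0 h
    · exact absurd hw hw0
  -- double induction on levels j and j-1
  have TT : ∀ i : ℕ, (∀ jj, i + jj = j → P (w i) (w jj) = 0)
      ∧ (∀ jj, i + jj + 1 = j → P (w i) (w jj) = 0) := by
    intro i
    induction i with
    | zero =>
      constructor
      · intro jj hjj
        have : jj = j := by omega
        rw [this]
        exact hseed
      · intro jj hjj
        have hEj := hEA 0 j
        rw [hseed, lie_zero] at hEj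
        have he0 : ecoef (k := k) j 0 = 0 := rfl
        rw [he0, zero_smul, zero_add] at hEj
        have hne := ecoef_ne_zero (k := k) (j := j) (i := j) (by omega) le_rfl
        have := (smul_eq_zero.mp hEj.symm).resolve_left hne
        have hjj' : jj = j - 1 := by omega
        rw [hjj']
        exact this
    | succ i ih =>
      have hpart1 : ∀ jj, (i+1) + jj = j → P (w (i+1)) (w jj) = 0 := by
        intro jj hjj
        have hFi := hFA i jj
        rw [ih.2 jj (by omega), lie_zero, ih.1 (jj+1) (by omega), add_zero] at hFi
        exact hFi.symm
      refine ⟨hpart1, ?_⟩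
      intro jj hjj
      have hEi := hEA (i+1) (jj+1)
      rw [hpart1 (jj+1) (by omega), lie_zero] at hEi
      have hsimp : (i+1) - 1 = i := by omega
      rw [hsimp, ih.2 (jj+1) (by omega), smul_zero, zero_add] at hEi
      have hsimp2 : (jj+1) - 1 = jj := by omega
      rw [hsimp2] at hEi
      have hne := ecoef_ne_zero (k := k) (j := j) (i := jj+1) (by omega) (by omega)
      exact (smul_eq_zero.mp hEi.symm).resolve_left hne
  -- level j+1
  have Zm1 : ∀ i jj : ℕ, i + jj = j + 1 → P (w i) (w jj) = 0 := by
    intro i jj hijj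
    rcases i with _ | i'
    · exact hAz2 0 jj (by omega)
    rcases jj with _ | jj'
    · exact hAz (i'+1) 0 (by omega)
    have hEi := hEA (i'+1) (jj'+1)
    have hs1 : (i'+1) - 1 = i' := by omega
    have hs2 : (jj'+1) - 1 = jj' := by omega
    rw [hs1, hs2, (TT i').1 (jj'+1) (by omega), (TT (i'+1)).1 jj' (by omega),
      smul_zero, smul_zero, add_zero] at hEi
    have hwt : ⁅Hel k, P (w (i'+1)) (w (jj'+1))⁆ = (-2:k) • P (w (i'+1)) (w (jj'+1)) := by
      rw [hHA]
      congr 1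
      show ((j:k) - 2*((i'+1:ℕ):k)) + ((j:k) - 2*((jj'+1:ℕ):k)) = -2
      have hcast : ((i':ℕ):k) + ((jj':ℕ):k) + 2 = (j:k) + 1 := by
        exact_mod_cast congrArg (Nat.cast (R := k)) (show i' + jj' + 2 = j + 1 by omega)
      push_cast
      push_cast at hcast
      linear_combination -2*hcast
    exact wt_neg2 hwt hEi
  -- assemble
  intro i jj
  rcases (by omega : i + jj + 2 ≤ j ∨ i + jj + 1 = j ∨ i + jj = j ∨ i + jj = j + 1
      ∨ j + 2 ≤ i + jj) with h | h | h | h | h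
  · exact Kwt i jj (Or.inl h)
  · exact (TT i).2 jj h
  · exact (TT i).1 jj h
  · exact Zm1 i jj h
  · exact Kwt i jj (Or.inr h)

lemma step1 (li : LinearIndependent k (fun i : Fin (j+1) => w (i:ℕ))) :
    ∀ (i : ℕ) (vv : g1), P (w i) vv = 0 := by
  have hs0 := step0 P hPsymm h1 h2 w j hj hH hF hE hzero hw0
  have hjk : ((j:ℕ):k) ≠ 0 := Nat.cast_ne_zero.mpr (by omega)
  have hc0j : hcoef (k := k) j 0 = (j:k) := by
    show (j:k) - 2*((0:ℕ):k) = _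
    push_cast; ring
  intro i vv
  by_cases hi : j+1 ≤ i
  · rw [hzero i hi]
    simp
  push_neg at hi
  have hij : i ≤ j := by omega
  have halt : ∀ p q : ℕ, ⁅P (w p) vv, w q⁆ + ⁅P (w q) vv, w p⁆ = 0 := by
    intro p q
    have hh := h1 (w p) (w q) vv
    rw [hs0 p q, zero_lie, zero_add, hPsymm vv (w p), add_comm] at hh
    exact hh
  have hself : ∀ p : ℕ, ⁅P (w p) vv, w p⁆ = 0 := by
    intro p
    have hh := halt p p
    have h2s : (2:k) • ⁅P (w p) vv, w p⁆ = 0 := by rw [two_smul]; exact hh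
    exact (smul_eq_zero.mp h2s).resolve_left two_ne_zero
  have hexp : ∀ (a b c : k) (n : ℕ), ⁅a • Eel k + b • Hel k + c • Fel k, w n⁆
      = (a * ecoef (k := k) j n) • w (n-1) + (b * hcoef (k := k) j n) • w n + c • w (n+1) := by
    intro a b c n
    rw [add_lie, add_lie, smul_lie, smul_lie, smul_lie, hE n, hH n, hF n, smul_smul, smul_smul]
  -- φ0 = 0
  set X0 := P (w 0) vv with hX0def
  have hspan0 := sl2_span X0
  set a0 := X0.val 0 1 with ha0def
  set b0 := X0.val 0 0 with hb0def
  set c0 := X0.val 1 0 with hc0def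
  have h00 := hself 0
  rw [← hX0def, hspan0, hexp] at h00
  rw [show ecoef (k := k) j 0 = 0 from rfl, mul_zero, zero_smul, zero_add] at h00
  obtain ⟨hb0, hc0⟩ := extract2 li (p := (⟨0, by omega⟩ : Fin (j+1)))
    (q := (⟨1, by omega⟩ : Fin (j+1))) (by simp only [ne_eq, Fin.mk.injEq]; omega) h00
  have hb0' : b0 = 0 := by
    rw [hc0j] at hb0
    exact (mul_eq_zero.mp hb0).resolve_right hjk
  have hX0E : X0 = a0 • Eel k := by
    rw [hspan0, hb0', hc0, zero_smul, zero_smul, add_zero, add_zero]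
  -- φj = 0
  set Xj := P (w j) vv with hXjdef
  have hspanj := sl2_span Xj
  set aj := Xj.val 0 1 with hajdef
  set bj := Xj.val 0 0 with hbjdef
  set cj := Xj.val 1 0 with hcjdef
  have hjj := hself j
  rw [← hXjdef, hspanj, hexp] at hjj
  rw [hzero (j+1) (by omega), smul_zero, add_zero] at hjj
  obtain ⟨haj, hbj⟩ := extract2 li (p := (⟨j-1, by omega⟩ : Fin (j+1)))
    (q := (⟨j, by omega⟩ : Fin (j+1))) (by simp only [ne_eq, Fin.mk.injEq]; omega) hjj
  have haj' : aj = 0 :=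
    (mul_eq_zero.mp haj).resolve_right (ecoef_ne_zero (by omega) le_rfl)
  have hbj' : bj = 0 := by
    have hhcj : hcoef (k := k) j j = -(j:k) := by
      show (j:k) - 2*((j:ℕ):k) = _
      push_cast; ring
    rw [hhcj] at hbj
    rcases mul_eq_zero.mp hbj with h | h
    · exact h
    · exact absurd (neg_eq_zero.mp h) hjk
  have hXjF : Xj = cj • Fel k := by
    rw [hspanj, haj', hbj', zero_smul, zero_smul, zero_add, zero_add]
  -- cross relation (0, j)
  have hcross := halt 0 j
  rw [← hX0def, ← hXjdef, hX0E, hXjF, smul_lie, smul_lie, hE j, hF 0, smul_smul] at hcross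
  obtain ⟨ha0, hcj⟩ := extract2 li (p := (⟨j-1, by omega⟩ : Fin (j+1)))
    (q := (⟨1, by omega⟩ : Fin (j+1))) (by simp only [ne_eq, Fin.mk.injEq]; omega) hcross
  have ha0' : a0 = 0 :=
    (mul_eq_zero.mp ha0).resolve_right (ecoef_ne_zero (by omega) le_rfl)
  have hX0zero : X0 = 0 := by rw [hX0E, ha0', zero_smul]
  have hXjzero : Xj = 0 := by rw [hXjF, hcj, zero_smul]
  -- cases on i
  rcases (by omega : i = 0 ∨ i = j ∨ (1 ≤ i ∧ i + 1 ≤ j)) with hcase | hcase | hcase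
  · rw [hcase]
    exact hX0zero
  · rw [hcase]
    exact hXjzero
  · -- middle
    set Xi := P (w i) vv with hXidef
    have hspani := sl2_span Xi
    set ai := Xi.val 0 1 with haidef
    set bi := Xi.val 0 0 with hbidef
    set ci := Xi.val 1 0 with hcidef
    have hii := hself i
    rw [← hXidef, hspani, hexp] at hii
    obtain ⟨hai, -, hci⟩ := extract3 li (p := (⟨i-1, by omega⟩ : Fin (j+1)))
      (q := (⟨i, by omega⟩ : Fin (j+1))) (r := (⟨i+1, by omega⟩ : Fin (j+1)))
      (by simp only [ne_eq, Fin.mk.injEq]; omega) (by simp only [ne_eq, Fin.mk.injEq]; omega)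
      (by simp only [ne_eq, Fin.mk.injEq]; omega) hii
    have hai' : ai = 0 :=
      (mul_eq_zero.mp hai).resolve_right (ecoef_ne_zero (by omega) (by omega))
    have h0i := halt i 0
    rw [← hX0def, hX0zero, zero_lie, add_zero, ← hXidef, hspani, hexp] at h0i
    rw [show ecoef (k := k) j 0 = 0 from rfl, mul_zero, zero_smul, zero_add, hci, zero_smul,
      add_zero, hc0j] at h0i
    have hbi' : bi = 0 := by
      rcases smul_eq_zero.mp h0i with h | h
      · rcases mul_eq_zero.mp h with h' | h'
        · exact h'
        · exact absurd h' hjk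
      · exact absurd h hw0
    rw [hspani, hai', hbi', hci, zero_smul, zero_smul, zero_smul, add_zero, add_zero]

end WithP

end Steps

end Stmt15Aux

section Main

open Stmt15Aux LieModule

set_option maxHeartbeats 1000000 in
/-- Over a field of characteristic zero, let `𝔤 = sl(2,k) ⊕ 𝔤₁` be a
finite-dimensional Lie superalgebra (encoded by the action of `sl(2,k)` on `𝔤₁` and the
symmetric bilinear map `P = {·,·}|_{𝔤₁×𝔤₁}` satisfying relations (1) and (2)). If `𝔤₁`
contains an irreducible submodule of dimension strictly greater than 3, then
`{𝔤₁, 𝔤₁} = 0`. -/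
theorem stmt_15 (k g1 : Type*) [Field k] [CharZero k]
    [AddCommGroup g1] [Module k g1] [LieRingModule (sl2 k) g1] [LieModule k (sl2 k) g1]
    [FiniteDimensional k g1]
    (P : g1 →ₗ[k] g1 →ₗ[k] sl2 k) (hPsymm : ∀ u v : g1, P u v = P v u)
    (h1 : ∀ u v w : g1, ⁅P u v, w⁆ + ⁅P v w, u⁆ + ⁅P w u, v⁆ = 0)
    (h2 : ∀ (x : sl2 k) (u v : g1), ⁅x, P u v⁆ = P ⁅x, u⁆ v + P u ⁅x, v⁆)
    (W : LieSubmodule k (sl2 k) g1)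
    (hWirr : LieModule.IsIrreducible k (sl2 k) ↥W)
    (hWdim : 3 < Module.finrank k ↥W) :
    ∀ u v : g1, P u v = 0 := by
  classical
  haveI hfdW : FiniteDimensional k ↥W := inferInstanceAs (FiniteDimensional k W.toSubmodule)
  haveI : Nontrivial ↥W := Module.nontrivial_of_finrank_pos (R := k) (by omega)
  set NN := LieModule.toEnd k (sl2 k) ↥W (Eel k) with hNN
  set MM := LieModule.toEnd k (sl2 k) ↥W (Fel k) with hMM
  set AA := LieModule.toEnd k (sl2 k) ↥W (Hel k) with hAA
  have hNM : ∀ z : ↥W, NN (MM z) = MM (NN z) + AA z := by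
    intro z
    have h := lie_lie (Eel k) (Fel k) z
    rw [(sl2_triple (k := k)).lie_e_f] at h
    simp only [hNN, hMM, hAA, LieModule.toEnd_apply_apply]
    rw [h]
    abel
  have hAN : ∀ z : ↥W, NN (AA z) = AA (NN z) - (2:k) • NN z := by
    intro z
    have h := lie_lie (Hel k) (Eel k) z
    rw [(sl2_triple (k := k)).lie_h_e_smul k, smul_lie] at h
    simp only [hNN, hAA, LieModule.toEnd_apply_apply]
    rw [h]
    abel
  have hAM : ∀ z : ↥W, MM (AA z) = AA (MM z) + (2:k) • MM z := by
    intro z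
    have h := lie_lie (Hel k) (Fel k) z
    rw [(sl2_triple (k := k)).lie_lie_smul_f k, neg_lie, smul_lie] at h
    simp only [hMM, hAA, LieModule.toEnd_apply_apply]
    have h2z : ⁅Fel k, ⁅Hel k, z⁆⁆ - ⁅Hel k, ⁅Fel k, z⁆⁆ = (2:k) • ⁅Fel k, z⁆ := by
      rw [← neg_sub, ← h, neg_neg]
    rw [← h2z]
    abel
  have hNnil : IsNilpotent NN := by
    apply isNilpotent_of_lie_two_smul AA NN
    refine LinearMap.ext fun z => ?_
    simp only [LinearMap.sub_apply, Module.End.mul_apply, LinearMap.smul_apply]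
    rw [hAN z]
    abel
  have hMnil : IsNilpotent MM := by
    apply isNilpotent_of_lie_two_smul (-AA) MM
    refine LinearMap.ext fun z => ?_
    simp only [LinearMap.sub_apply, Module.End.mul_apply, LinearMap.smul_apply,
      LinearMap.neg_apply, map_neg]
    rw [hAM z]
    abel
  obtain ⟨v0, hv0ne, hv0ker⟩ := exists_ker_ne_zero NN hNnil
  obtain ⟨d, hd⟩ := hMnil
  obtain ⟨j, uvec, hune, hNu, hAu⟩ := K3 AA NN MM hNM hAN hAM d v0 hv0ne hv0ker
    (by rw [hd]; rfl)
  have prim : (sl2_triple (k := k)).HasPrimitiveVectorWith uvec ((j:ℕ):k) :=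
    { ne_zero := hune
      lie_h := by
        rw [← LieModule.toEnd_apply_apply (R := k) (L := sl2 k) (M := ↥W)]
        exact hAu
      lie_e := by
        rw [← LieModule.toEnd_apply_apply (R := k) (L := sl2 k) (M := ↥W)]
        exact hNu }
  set wsub : ℕ → ↥W := fun i => ((LieModule.toEnd k (sl2 k) ↥W (Fel k))^i) uvec with hwsub
  have hws0 : wsub 0 = uvec := by simp [hwsub]
  have htop : wsub (j+1) = 0 := prim.pow_toEnd_f_eq_zero_of_eq_nat rfl
  have hwne : ∀ i, i ≤ j → wsub i ≠ 0 := fun i hi =>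
    prim.pow_toEnd_f_ne_zero_of_eq_nat rfl hi
  have hWH : ∀ n : ℕ, ⁅Hel k, wsub n⁆ = (((j:ℕ):k) - 2*n) • wsub n := fun n =>
    prim.lie_h_pow_toEnd_f n
  have hWF : ∀ n : ℕ, ⁅Fel k, wsub n⁆ = wsub (n+1) := fun n => prim.lie_f_pow_toEnd_f n
  have hWE : ∀ n : ℕ, ⁅Eel k, wsub (n+1)⁆ = (((n:ℕ)+1) * (((j:ℕ):k) - n)) • wsub n := fun n =>
    prim.lie_e_pow_succ_toEnd_f n
  have hWzero : ∀ i, j+1 ≤ i → wsub i = 0 := by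
    have haux : ∀ tdiff, wsub (j+1+tdiff) = 0 := by
      intro tdiff
      induction tdiff with
      | zero => exact htop
      | succ t ih =>
        rw [show j+1+(t+1) = (j+1+t)+1 from rfl, ← hWF, ih, lie_zero]
    intro i hi
    obtain ⟨tdiff, rfl⟩ : ∃ tdiff, i = (j+1)+tdiff := ⟨i-(j+1), by omega⟩
    exact haux tdiff
  set famW : Fin (j+1) → ↥W := fun i => wsub (i:ℕ) with hfamW
  set V0 : Submodule k ↥W := Submodule.span k (Set.range famW) with hV0
  have hlie : ∀ (x : sl2 k) (z : ↥W), z ∈ V0 → ⁅x, z⁆ ∈ V0 := by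
    intro x z hz
    induction hz using Submodule.span_induction with
    | mem y hy =>
      obtain ⟨i, rfl⟩ := hy
      rw [sl2_span x, add_lie, add_lie, smul_lie, smul_lie, smul_lie]
      refine Submodule.add_mem _ (Submodule.add_mem _ ?_ ?_) ?_
      · apply Submodule.smul_mem
        show ⁅Eel k, wsub (i:ℕ)⁆ ∈ V0
        rcases Nat.eq_zero_or_pos (i:ℕ) with h0 | hpos
        · rw [h0, hws0, prim.lie_e]
          exact Submodule.zero_mem _
        · obtain ⟨n, hn⟩ : ∃ n, (i:ℕ) = n+1 := ⟨(i:ℕ)-1, by omega⟩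
          rw [hn, hWE n]
          apply Submodule.smul_mem
          have hnlt : n < j + 1 := by have := i.isLt; omega
          exact Submodule.subset_span ⟨⟨n, hnlt⟩, rfl⟩
      · apply Submodule.smul_mem
        show ⁅Hel k, wsub (i:ℕ)⁆ ∈ V0
        rw [hWH]
        apply Submodule.smul_mem
        exact Submodule.subset_span ⟨i, rfl⟩
      · apply Submodule.smul_mem
        show ⁅Fel k, wsub (i:ℕ)⁆ ∈ V0
        rw [hWF]
        by_cases hij : (i:ℕ) = j
        · rw [hij, htop]
          exact Submodule.zero_mem _
        · have hlt : (i:ℕ)+1 < j+1 := by have := i.isLt; omega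
          exact Submodule.subset_span ⟨⟨(i:ℕ)+1, hlt⟩, rfl⟩
    | zero =>
      rw [lie_zero]
      exact Submodule.zero_mem _
    | add y1 y2 hy1 hy2 ih1 ih2 =>
      rw [lie_add]
      exact Submodule.add_mem _ ih1 ih2
    | smul c y hy ihy =>
      rw [lie_smul]
      exact Submodule.smul_mem _ _ ihy
  set VL : LieSubmodule k (sl2 k) ↥W :=
    { toSubmodule := V0, lie_mem := fun {x m} h => hlie x m h } with hVL
  have huV0 : uvec ∈ V0 := by
    apply Submodule.subset_span
    exact ⟨⟨0, by omega⟩, hws0⟩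
  have hVLtop : VL = ⊤ := by
    rcases hWirr.eq_bot_or_eq_top VL with hbot | htopp
    · exfalso
      have hmem : uvec ∈ VL := huV0
      rw [hbot] at hmem
      exact hune ((LieSubmodule.mem_bot _).mp hmem)
    · exact htopp
  have hV0top : V0 = ⊤ := by
    have hcg := congrArg LieSubmodule.toSubmodule hVLtop
    rw [show (VL.toSubmodule) = V0 from rfl] at hcg
    rw [hcg]
    rfl
  have hfinle : Module.finrank k ↥W ≤ j + 1 := by
    have h1' := finrank_range_le_card (R := k) famW
    rw [Set.finrank] at h1'
    rw [← hV0] at h1'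
    rw [hV0top, finrank_top] at h1'
    simpa using h1'
  have hj3 : 3 ≤ j := by omega
  set w : ℕ → g1 := fun i => ((wsub i : ↥W) : g1) with hwdef
  have hHg : ∀ i, ⁅Hel k, w i⁆ = hcoef (k := k) j i • w i := by
    intro i
    show ⁅Hel k, ((wsub i : ↥W) : g1)⁆ = hcoef (k := k) j i • ((wsub i : ↥W) : g1)
    rw [← LieSubmodule.coe_bracket, hWH i, LieSubmodule.coe_smul]
    rfl
  have hFg : ∀ i, ⁅Fel k, w i⁆ = w (i+1) := by
    intro i
    show ⁅Fel k, ((wsub i : ↥W) : g1)⁆ = ((wsub (i+1) : ↥W) : g1)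
    rw [← LieSubmodule.coe_bracket, hWF i]
  have hEg : ∀ i, ⁅Eel k, w i⁆ = ecoef (k := k) j i • w (i-1) := by
    intro i
    cases i with
    | zero =>
      show ⁅Eel k, ((wsub 0 : ↥W) : g1)⁆ = ecoef (k := k) j 0 • ((wsub (0-1) : ↥W) : g1)
      rw [← LieSubmodule.coe_bracket, hws0, prim.lie_e,
        show ecoef (k := k) j 0 = 0 from rfl, zero_smul]
      rfl
    | succ n =>
      show ⁅Eel k, ((wsub (n+1) : ↥W) : g1)⁆
          = ecoef (k := k) j (n+1) • ((wsub ((n+1)-1) : ↥W) : g1)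
      rw [← LieSubmodule.coe_bracket, hWE n, LieSubmodule.coe_smul]
      have hco : ecoef (k := k) j (n+1) = (((n:ℕ):k)+1) * (((j:ℕ):k) - (n:ℕ)) := by
        show ((n+1:ℕ):k) * ((j:k) - (n:ℕ)) = _
        push_cast
        ring
      rw [hco]
      rfl
  have hzero_g : ∀ i, j+1 ≤ i → w i = 0 := by
    intro i hi
    show ((wsub i : ↥W) : g1) = 0
    rw [hWzero i hi]
    rfl
  have hw0ne : w 0 ≠ 0 := by
    show ((wsub 0 : ↥W) : g1) ≠ 0
    simpa using hwne 0 (by omega)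
  have li : LinearIndependent k (fun i : Fin (j+1) => w (i:ℕ)) := by
    apply Module.End.eigenvectors_linearIndependent' (LieModule.toEnd k (sl2 k) g1 (Hel k))
      (fun i : Fin (j+1) => hcoef (k := k) j (i:ℕ)) ?_ _ ?_
    · intro i1 i2 h12
      have h2' : (2:k) * (((i1:ℕ):ℕ):k) = 2 * (((i2:ℕ):ℕ):k) := by
        have : ((j:ℕ):k) - 2*((i1:ℕ):k) = ((j:ℕ):k) - 2*((i2:ℕ):k) := h12
        linear_combination -this
      have h3' := mul_left_cancel₀ (two_ne_zero) h2'
      exact Fin.ext (Nat.cast_injective h3')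
    · intro i
      constructor
      · rw [Module.End.mem_eigenspace_iff, LieModule.toEnd_apply_apply]
        exact hHg (i:ℕ)
      · show ((wsub (i:ℕ) : ↥W) : g1) ≠ 0
        have := hwne (i:ℕ) (by have := i.isLt; omega)
        simpa using this
  have hstep1 := step1 P hPsymm h1 h2 w j hj3 hHg hFg hEg hzero_g hw0ne li
  intro uu vv
  have hXw : ∀ n : ℕ, ⁅P uu vv, w n⁆ = 0 := by
    intro n
    have hh := h1 uu vv (w n)
    rw [hPsymm vv (w n), hstep1 n vv, hstep1 n uu, zero_lie, zero_lie, add_zero, add_zero] at hh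
    exact hh
  set X := P uu vv with hXdef
  have hspan := sl2_span X
  set a := X.val 0 1 with hadef
  set b := X.val 0 0 with hbdef
  set c := X.val 1 0 with hcdef
  have hc0j : hcoef (k := k) j 0 = ((j:ℕ):k) := by
    show ((j:ℕ):k) - 2*((0:ℕ):k) = _
    push_cast
    ring
  have hjk : ((j:ℕ):k) ≠ 0 := Nat.cast_ne_zero.mpr (by omega)
  have h0 : ⁅X, w 0⁆ = 0 := hXw 0
  rw [hspan, add_lie, add_lie, smul_lie, smul_lie, smul_lie, hEg 0, hHg 0, hFg 0,
    smul_smul, smul_smul, show ecoef (k := k) j 0 = 0 from rfl, mul_zero, zero_smul,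
    zero_add] at h0
  obtain ⟨hb0, hc0⟩ := extract2 li (p := (⟨0, by omega⟩ : Fin (j+1)))
    (q := (⟨1, by omega⟩ : Fin (j+1))) (by simp only [ne_eq, Fin.mk.injEq]; omega) h0
  have hb' : b = 0 := by
    rw [hc0j] at hb0
    exact (mul_eq_zero.mp hb0).resolve_right hjk
  have h1x : ⁅X, w 1⁆ = 0 := hXw 1
  rw [hspan, add_lie, add_lie, smul_lie, smul_lie, smul_lie, hEg 1, hHg 1, hFg 1,
    smul_smul, smul_smul, hb', hc0, zero_mul, zero_smul, zero_smul, add_zero, add_zero] at h1x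
  have he1 : ecoef (k := k) j 1 ≠ 0 := ecoef_ne_zero le_rfl (by omega)
  have ha' : a = 0 := by
    rcases smul_eq_zero.mp h1x with h | h
    · exact (mul_eq_zero.mp h).resolve_right he1
    · exact absurd h hw0ne
  rw [hspan, ha', hb', hc0, zero_smul, zero_smul, zero_smul, add_zero, add_zero]

end Main
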